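/- Let A ⊆ ℝⁿ be an H-polyhedron with nonempty interior and let A = ⋂_{i=1}^t Cᵢ be an irredundant decomposition into closed half-spaces, with Hᵢ = ∂Cᵢ the bounding hyperplane of Cᵢ. Then each facet Hᵢ ∩ A has nonempty interior in Hᵢ, the boundary of A satisfies ∂A = ⋃_{i=1}^t (Hᵢ ∩ A), and this union is irredundant: Hᵢ ∩ A is not contained in Hⱼ ∩ A for any i ≠ j. -/

import Mathlib

set_option maxHeartbeats 1000000


open RealInnerProductSpace

/-- A closed half-space in `ℝⁿ`: `{x | ⟪a, x⟫ ≤ b}` with `a ≠ 0`. -/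
def IsClosedHalfSpace {n : ℕ} (C : Set (EuclideanSpace ℝ (Fin n))) : Prop :=
  ∃ (a : EuclideanSpace ℝ (Fin n)) (b : ℝ), a ≠ 0 ∧
    C = {x : EuclideanSpace ℝ (Fin n) | ⟪a, x⟫ ≤ b}

lemma halfspace_interior_frontier {n : ℕ} (a : EuclideanSpace ℝ (Fin n)) (ha : a ≠ 0) (b : ℝ) :
    interior {x : EuclideanSpace ℝ (Fin n) | ⟪a, x⟫ ≤ b} = {x | ⟪a, x⟫ < b} ∧
    frontier {x : EuclideanSpace ℝ (Fin n) | ⟪a, x⟫ ≤ b} = {x | ⟪a, x⟫ = b} := by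
  have haa : ⟪a, a⟫ ≠ 0 := inner_self_ne_zero.2 ha
  have hsurj : Function.Surjective (innerSL ℝ a) := by
    intro r
    refine ⟨(r / ⟪a, a⟫) • a, ?_⟩
    rw [map_smul, smul_eq_mul, innerSL_apply_apply, div_mul_cancel₀ r haa]
  have h1 : {x : EuclideanSpace ℝ (Fin n) | ⟪a, x⟫ ≤ b} = (innerSL ℝ a) ⁻¹' (Set.Iic b) := rfl
  constructor
  · rw [h1, (innerSL ℝ a).interior_preimage hsurj, interior_Iic]; rfl
  · rw [h1, (innerSL ℝ a).frontier_preimage hsurj, frontier_Iic]; rfl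

lemma remove_aux {α : Type*} {t : ℕ} (C : Fin t → Set α) (j : Fin t)
    (hred : ∀ x, (∀ k, k ≠ j → x ∈ C k) → x ∈ C j) :
    ∃ m, m < t ∧ ∃ D : Fin m → Set α,
      (∀ k, ∃ k', D k = C k') ∧ (⋂ k, C k) = ⋂ k, D k := by
  cases t with
  | zero => exact j.elim0
  | succ m =>
    refine ⟨m, Nat.lt_succ_self m, fun k => C (j.succAbove k), fun k => ⟨_, rfl⟩, ?_⟩
    apply subset_antisymm
    · exact Set.iInter_mono' fun k => ⟨j.succAbove k, subset_rfl⟩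
    · intro x hx
      have h1 : ∀ k, k ≠ j → x ∈ C k := by
        intro k hk
        obtain ⟨l, rfl⟩ := Fin.exists_succAbove_eq hk
        exact Set.mem_iInter.1 hx l
      refine Set.mem_iInter.2 fun k => ?_
      rcases eq_or_ne k j with rfl | hk
      · exact hred x h1
      · exact h1 k hk

/-- For an irredundant decomposition `A = ⋂ᵢ Cᵢ` of a polyhedron with nonempty
interior, each facet `Hᵢ ∩ A` (where `Hᵢ = ∂Cᵢ`) has nonempty interior in `Hᵢ`,
the boundary of `A` is the union of the facets, and this union is irredundant. -/
theorem facets_of_irredundant_decomposition (n t : ℕ)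
    (A : Set (EuclideanSpace ℝ (Fin n))) (hint : (interior A).Nonempty)
    (C : Fin t → Set (EuclideanSpace ℝ (Fin n)))
    (hC : ∀ i, IsClosedHalfSpace (C i))
    (hA : A = ⋂ i, C i)
    (hirr : ¬ ∃ m : ℕ, m < t ∧ ∃ D : Fin m → Set (EuclideanSpace ℝ (Fin n)),
      (∀ i, IsClosedHalfSpace (D i)) ∧ A = ⋂ i, D i) :
    (∀ i, (interior ((Subtype.val ⁻¹' A) : Set (frontier (C i)))).Nonempty) ∧
    (frontier A = ⋃ i, frontier (C i) ∩ A) ∧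
    (∀ i j : Fin t, i ≠ j → ¬ (frontier (C i) ∩ A ⊆ frontier (C j) ∩ A)) := by
  choose a b ha hCeq using hC
  have hfcont : ∀ i : Fin t, Continuous fun x : EuclideanSpace ℝ (Fin n) => ⟪a i, x⟫ :=
    fun i => continuous_const.inner continuous_id
  have hIntC : ∀ i, interior (C i) = {x | ⟪a i, x⟫ < b i} := fun i => by
    rw [hCeq i]; exact (halfspace_interior_frontier (a i) (ha i) (b i)).1
  have hFrC : ∀ i, frontier (C i) = {x | ⟪a i, x⟫ = b i} := fun i => by
    rw [hCeq i]; exact (halfspace_interior_frontier (a i) (ha i) (b i)).2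
  have hCclosed : ∀ i, IsClosed (C i) := fun i => by
    rw [hCeq i]; exact isClosed_le (hfcont i) continuous_const
  have hsubint : ∀ i, interior A ⊆ interior (C i) := fun i =>
    interior_mono (by rw [hA]; exact Set.iInter_subset _ i)
  obtain ⟨x₀, hx₀⟩ := hint
  have hx₀lt : ∀ i, ⟪a i, x₀⟫ < b i := by
    intro i
    have := hsubint i hx₀
    rwa [hIntC i] at this
  have hmemA : ∀ x, x ∈ A → ∀ i, ⟪a i, x⟫ ≤ b i := by
    intro x hx i
    have := Set.mem_iInter.1 (hA ▸ hx) i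
    rwa [hCeq i] at this
  have remove : ∀ j : Fin t, ¬ (∀ x, (∀ k, k ≠ j → x ∈ C k) → x ∈ C j) := by
    intro j hred
    obtain ⟨m, hm, D, hD, hDeq⟩ := remove_aux C j hred
    refine hirr ⟨m, hm, D, fun k => ?_, by rw [hA, hDeq]⟩
    obtain ⟨k', hk'⟩ := hD k
    rw [hk']; exact ⟨a k', b k', ha k', hCeq k'⟩
  have witness : ∀ i : Fin t, ∃ y, (∀ k, k ≠ i → y ∈ C k) ∧ b i < ⟪a i, y⟫ := by
    intro i
    have h := remove i
    push_neg at h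
    obtain ⟨y, hy1, hy2⟩ := h
    refine ⟨y, hy1, ?_⟩
    by_contra h
    push_neg at h
    exact hy2 (by rw [hCeq i]; exact h)
  -- key construction: a relatively interior point of each facet
  have key : ∀ i : Fin t, ∃ z, z ∈ frontier (C i) ∧ z ∈ A ∧
      ∃ ε > 0, ∀ w, dist w z < ε → w ∈ frontier (C i) → w ∈ A := by
    intro i
    obtain ⟨y, hy, hyi⟩ := witness i
    have hpq : ⟪a i, x₀⟫ < ⟪a i, y⟫ := lt_trans (hx₀lt i) hyi
    have hden : (0:ℝ) < ⟪a i, y⟫ - ⟪a i, x₀⟫ := sub_pos.2 hpq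
    set s : ℝ := (b i - ⟪a i, x₀⟫) / (⟪a i, y⟫ - ⟪a i, x₀⟫) with hs
    have hs0 : 0 < s := div_pos (sub_pos.2 (hx₀lt i)) hden
    have hs1 : s < 1 := (div_lt_one hden).2 (by linarith)
    have hsden : s * (⟪a i, y⟫ - ⟪a i, x₀⟫) = b i - ⟪a i, x₀⟫ :=
      div_mul_cancel₀ _ hden.ne'
    set z := x₀ + s • (y - x₀) with hz
    have hinner : ∀ k : Fin t,
        ⟪a k, z⟫ = (1 - s) * ⟪a k, x₀⟫ + s * ⟪a k, y⟫ := by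
      intro k
      rw [hz, inner_add_right, inner_smul_right, inner_sub_right]; ring
    have hziz : ⟪a i, z⟫ = b i := by
      rw [hinner i]; nlinarith [hsden]
    have hzj : ∀ j, j ≠ i → ⟪a j, z⟫ < b j := by
      intro j hj
      have hyj : ⟪a j, y⟫ ≤ b j := by
        have := hy j hj; rwa [hCeq j] at this
      have hxj : ⟪a j, x₀⟫ < b j := hx₀lt j
      have h1 : (1 - s) * ⟪a j, x₀⟫ < (1 - s) * b j :=
        mul_lt_mul_of_pos_left hxj (by linarith)
      have h2 : s * ⟪a j, y⟫ ≤ s * b j := mul_le_mul_of_nonneg_left hyj hs0.le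
      rw [hinner j]; linarith
    have hzA : z ∈ A := by
      rw [hA]
      refine Set.mem_iInter.2 fun k => ?_
      rw [hCeq k]
      rcases eq_or_ne k i with rfl | hk
      · exact le_of_eq hziz
      · exact le_of_lt (hzj k hk)
    have hzf : z ∈ frontier (C i) := by rw [hFrC i]; exact hziz
    set U : Set (EuclideanSpace ℝ (Fin n)) :=
      ⋂ j ∈ Finset.univ.erase i, {x | ⟪a j, x⟫ < b j} with hU
    have hUopen : IsOpen U :=
      isOpen_biInter_finset fun j _ => isOpen_lt (hfcont j) continuous_const
    have hzU : z ∈ U := by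
      rw [hU]
      simp only [Set.mem_iInter]
      intro j hj
      exact hzj j (Finset.mem_erase.1 hj).1
    obtain ⟨ε, hε, hball⟩ := Metric.isOpen_iff.1 hUopen z hzU
    refine ⟨z, hzf, hzA, ε, hε, fun w hdw hwf => ?_⟩
    have hwU : w ∈ U := hball (Metric.mem_ball.2 hdw)
    rw [hFrC i] at hwf
    rw [hA]
    refine Set.mem_iInter.2 fun k => ?_
    rw [hCeq k]
    rcases eq_or_ne k i with rfl | hk
    · exact le_of_eq hwf
    · have : w ∈ ({x | ⟪a k, x⟫ < b k} : Set (EuclideanSpace ℝ (Fin n))) := by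
        rw [hU] at hwU
        exact Set.mem_iInter.1 (Set.mem_iInter.1 hwU k) (Finset.mem_erase.2 ⟨hk, Finset.mem_univ k⟩)
      exact le_of_lt (show (⟪a k, w⟫:ℝ) < b k from this)
  refine ⟨?_, ?_, ?_⟩
  · -- part 1
    intro i
    obtain ⟨z, hzf, hzA, ε, hε, hball⟩ := key i
    refine ⟨⟨z, hzf⟩, ?_⟩
    rw [mem_interior]
    refine ⟨Subtype.val ⁻¹' Metric.ball z ε, ?_,
      Metric.isOpen_ball.preimage continuous_subtype_val, ?_⟩
    · intro w hwb
      exact hball w.1 (Metric.mem_ball.1 hwb) w.2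
    · exact Set.mem_preimage.2 (Metric.mem_ball_self hε)
  · -- part 2
    have hAclosed : IsClosed A := by
      rw [hA]; exact isClosed_iInter hCclosed
    ext x
    simp only [Set.mem_iUnion, Set.mem_inter_iff]
    rw [hAclosed.frontier_eq, Set.mem_diff]
    constructor
    · rintro ⟨hxA, hxni⟩
      have hex : ∃ i, ⟪a i, x⟫ = b i := by
        by_contra hcon
        push_neg at hcon
        have hxlt : ∀ i, ⟪a i, x⟫ < b i := fun i =>
          lt_of_le_of_ne (hmemA x hxA i) (hcon i)
        have hVopen : IsOpen (⋂ i, {x : EuclideanSpace ℝ (Fin n) | ⟪a i, x⟫ < b i}) :=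
          isOpen_iInter_of_finite fun i => isOpen_lt (hfcont i) continuous_const
        have hVsub : (⋂ i, {x : EuclideanSpace ℝ (Fin n) | ⟪a i, x⟫ < b i}) ⊆ A := by
          intro v hv
          rw [hA]
          refine Set.mem_iInter.2 fun k => ?_
          rw [hCeq k]
          exact le_of_lt (show (⟪a k, v⟫:ℝ) < b k from Set.mem_iInter.1 hv k)
        exact hxni (interior_maximal hVsub hVopen (Set.mem_iInter.2 hxlt))
      obtain ⟨i, hi⟩ := hex
      exact ⟨i, by rw [hFrC i]; exact hi, hxA⟩
    · rintro ⟨i, hxf, hxA⟩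
      refine ⟨hxA, fun hxint => ?_⟩
      have h1 := hsubint i hxint
      rw [hIntC i] at h1
      rw [hFrC i] at hxf
      exact absurd hxf (ne_of_lt h1)
  · -- part 3
    intro i j hij hsub
    obtain ⟨z, hzf, hzA, ε, hε, hball⟩ := key i
    have hzib : ⟪a i, z⟫ = b i := by rw [hFrC i] at hzf; exact hzf
    have hzjm := hsub ⟨hzf, hzA⟩
    have hzjb : ⟪a j, z⟫ = b j := by
      have := hzjm.1; rwa [hFrC j] at this
    have hker : ∀ v, ⟪a i, v⟫ = 0 → ⟪a j, v⟫ = 0 := by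
      intro v hv
      set δ : ℝ := ε / (2 * (‖v‖ + 1)) with hδ
      have hδpos : 0 < δ := by positivity
      set w := z + δ • v with hw
      have hdist : dist w z < ε := by
        rw [hw, dist_eq_norm, add_sub_cancel_left, norm_smul, Real.norm_eq_abs,
          abs_of_pos hδpos, hδ, div_mul_eq_mul_div, div_lt_iff₀ (by positivity)]
        nlinarith [norm_nonneg v, mul_pos hε (by positivity : (0:ℝ) < ‖v‖ + 2)]
      have hwf : w ∈ frontier (C i) := by
        rw [hFrC i]
        show ⟪a i, w⟫ = b i
        rw [hw, inner_add_right, inner_smul_right, hv, mul_zero, add_zero, hzib]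
      have hwA : w ∈ A := hball w hdist hwf
      have hwj : ⟪a j, w⟫ = b j := by
        have := (hsub ⟨hwf, hwA⟩).1; rwa [hFrC j] at this
      rw [hw, inner_add_right, inner_smul_right, hzjb] at hwj
      have h0 : δ * ⟪a j, v⟫ = 0 := by linarith
      rcases mul_eq_zero.1 h0 with h | h
      · exact absurd h hδpos.ne'
      · exact h
    have hii : ⟪a i, a i⟫ ≠ 0 := inner_self_ne_zero.2 (ha i)
    set c : ℝ := ⟪a j, a i⟫ / ⟪a i, a i⟫ with hc
    have hscale : ∀ x, ⟪a j, x⟫ = c * ⟪a i, x⟫ := by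
      intro x
      have h0 : ⟪a i, x - (⟪a i, x⟫ / ⟪a i, a i⟫) • a i⟫ = 0 := by
        rw [inner_sub_right, inner_smul_right, div_mul_cancel₀ _ hii, sub_self]
      have h1 := hker _ h0
      rw [inner_sub_right, inner_smul_right, sub_eq_zero] at h1
      rw [h1, hc]
      ring
    have hbj : b j = c * b i := by rw [← hzjb, hscale z, hzib]
    have hc0 : c ≠ 0 := by
      intro h
      have h2 := hscale (a j)
      rw [h, zero_mul] at h2
      exact (ha j) (inner_self_eq_zero.1 h2)
    rcases hc0.lt_or_gt with hneg | hpos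
    · -- c < 0 : A is contained in the hyperplane, contradicting nonempty interior
      have hsub2 : A ⊆ {x | ⟪a i, x⟫ = b i} := by
        intro x hxA
        have h1 : ⟪a i, x⟫ ≤ b i := hmemA x hxA i
        have h2 : ⟪a j, x⟫ ≤ b j := hmemA x hxA j
        rw [hscale x, hbj] at h2
        have h3 : b i ≤ ⟪a i, x⟫ := by nlinarith
        exact le_antisymm h1 h3
      have hempty : interior A ⊆ (∅ : Set (EuclideanSpace ℝ (Fin n))) := by
        intro x hx
        have hxi : x ∈ interior {x | ⟪a i, x⟫ = b i} := interior_mono hsub2 hx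
        rw [← hFrC i, interior_frontier (hCclosed i)] at hxi
        exact hxi
      exact hempty hx₀
    · -- c > 0 : C j = C i, so C j is redundant
      have hCeqij : C j = C i := by
        rw [hCeq i, hCeq j]
        ext x
        simp only [Set.mem_setOf_eq]
        rw [hscale x, hbj]
        exact ⟨fun h => le_of_mul_le_mul_left h hpos,
          fun h => mul_le_mul_of_nonneg_left h hpos.le⟩
      exact remove j fun x hx => by rw [hCeqij]; exact hx i hij
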